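/- Let X be a distributive birack and let k ≥ 2. Then the following are equivalent: (i) X is k-reductive (both left and right k-reductive); (ii) X is k-permutational (both left and right k-permutational); (iii) the multiplication group Mlt(X), the subgroup of the symmetric group on X generated by all left translations L_x and all right translations R_x, is nilpotent of class at most k−1. -/

import Mathlib

open scoped commutatorElement

private lemma aux_lcs_step {H : Type*} [Group H] (m : ℕ) (P Q r : H)
    (h : P * Q⁻¹ ∈ (⊤ : Subgroup H).lowerCentralSeries m) :
    (P * r * P⁻¹) * (Q * r * Q⁻¹)⁻¹ ∈ (⊤ : Subgroup H).lowerCentralSeries (m + 1) := by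
  have key : (P * r * P⁻¹) * (Q * r * Q⁻¹)⁻¹ = ⁅P * Q⁻¹, Q * r * Q⁻¹⁆ := by
    rw [commutatorElement_def]; group
  rw [key]
  show _ ∈ ⁅(⊤ : Subgroup H).lowerCentralSeries m, (⊤ : Subgroup H)⁆
  exact Subgroup.commutator_mem_commutator h (Subgroup.mem_top _)

private lemma aux_comm_mem_of_gen {H : Type*} [Group H] {S : Set H}
    (hS : Subgroup.closure S = ⊤) {N : Subgroup H} (hN : N.Normal) (d : H)
    (hgen : ∀ s ∈ S, d * s * d⁻¹ * s⁻¹ ∈ N) :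
    ∀ h : H, d * h * d⁻¹ * h⁻¹ ∈ N := by
  intro h
  have hh : h ∈ Subgroup.closure S := by rw [hS]; exact Subgroup.mem_top h
  refine Subgroup.closure_induction (p := fun g _ => d * g * d⁻¹ * g⁻¹ ∈ N)
    (fun s hs => hgen s hs) (by simpa using N.one_mem) ?_ ?_ hh
  · intro g₁ g₂ _ _ m1 m2
    have key : d * (g₁ * g₂) * d⁻¹ * (g₁ * g₂)⁻¹
        = (d * g₁ * d⁻¹ * g₁⁻¹) * (g₁ * (d * g₂ * d⁻¹ * g₂⁻¹) * g₁⁻¹) := by group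
    rw [key]; exact N.mul_mem m1 (hN.conj_mem _ m2 g₁)
  · intro g _ m1
    have key : d * g⁻¹ * d⁻¹ * (g⁻¹)⁻¹ = g⁻¹ * (d * g * d⁻¹ * g⁻¹)⁻¹ * (g⁻¹)⁻¹ := by group
    rw [key]; exact hN.conj_mem _ (N.inv_mem m1) g⁻¹

private lemma aux_ucs_to_lcs {H : Type*} [Group H] (n : ℕ)
    (h : Subgroup.upperCentralSeries H n = ⊤) : (⊤ : Subgroup H).lowerCentralSeries n = ⊥ := by
  have key : ∀ i, i ≤ n → (⊤ : Subgroup H).lowerCentralSeries i ≤ Subgroup.upperCentralSeries H (n - i) := by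
    intro i
    induction i with
    | zero => intro _; rw [Nat.sub_zero, h]; exact le_top
    | succ i ih =>
      intro hi
      have h1 := ih (Nat.le_of_succ_le hi)
      show ⁅(⊤ : Subgroup H).lowerCentralSeries i, (⊤ : Subgroup H)⁆ ≤ _
      rw [Subgroup.commutator_le]
      intro g₁ hg₁ g₂ _
      have hg : g₁ ∈ Subgroup.upperCentralSeries H ((n - (i + 1)) + 1) := by
        have e : n - i = (n - (i + 1)) + 1 := by omega
        rw [← e]; exact h1 hg₁
      rw [commutatorElement_def]
      exact Subgroup.mem_upperCentralSeries_succ_iff.mp hg g₂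
  have h2 := key n le_rfl
  rw [Nat.sub_self, Subgroup.upperCentralSeries_zero] at h2
  exact le_bot_iff.mp h2

/-- For a distributive birack `(X, o, od, u, ud)` (where `o` is `∘`,
`od` is `\∘`, `u` is `•`, `ud` is `/•`) and `k ≥ 2`, the following are equivalent:
(i) `X` is `k`-reductive (left and right); (ii) `X` is `k`-permutational (left and
right); (iii) the multiplication group `Mlt(X) = ⟨L_x, R_x : x ∈ X⟩ ≤ Sym(X)` is
nilpotent of class at most `k-1`.
Here `L, R : X → Equiv.Perm X` are the left and right translations (`L x a = x∘a`,
`R x a = a•x`); `(…((a∘x₁)∘x₂)…)∘x_k` is encoded as `List.foldl o a [x₁,…,x_k]` and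
`x₀•(x₁•(…(x_{k-1}•b)…))` as `List.foldr u b [x₀,…,x_{k-1}]`. -/
theorem stmt_19 {X : Type*} (o od u ud : X → X → X)
    (h₁ : ∀ x y : X, o x (od x y) = y)
    (h₂ : ∀ x y : X, od x (o x y) = y)
    (h₃ : ∀ x y : X, u (ud y x) x = y)
    (h₄ : ∀ x y : X, ud (u y x) x = y)
    (h₅ : ∀ x y z : X, o x (o y z) = o (o x y) (o (u x y) z))
    (h₆ : ∀ x y z : X, u (o x y) (o (u x y) z) = o (u x (o y z)) (u y z))
    (h₇ : ∀ x y z : X, u (u x y) z = u (u x (o y z)) (u y z))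
    (hLD : ∀ x y z : X, o x (o y z) = o (o x y) (o x z))
    (hRD : ∀ x y z : X, u (u y z) x = u (u y x) (u z x))
    (L R : X → Equiv.Perm X) (hL : ∀ x a : X, L x a = o x a) (hR : ∀ x a : X, R x a = u a x)
    (k : ℕ) (hk : 2 ≤ k) :
    List.TFAE
      [(∀ (x₀ x₁ : X) (l : List X), l.length + 1 = k →
          List.foldl o x₀ (x₁ :: l) = List.foldl o x₁ l) ∧
       (∀ (l : List X) (a b : X), l.length + 1 = k →
          List.foldr u b (l ++ [a]) = List.foldr u a l),
       (∀ (x y : X) (l : List X), l.length = k →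
          List.foldl o x l = List.foldl o y l) ∧
       (∀ (x y : X) (l : List X), l.length = k →
          List.foldr u x l = List.foldr u y l),
       (⊤ : Subgroup (↥(Subgroup.closure (Set.range L ∪ Set.range R)))).lowerCentralSeries (k - 1) = ⊥] := by
  obtain ⟨m, rfl⟩ : ∃ m, k = m + 2 := ⟨k - 2, by omega⟩
  clear hk
  -- injectivity of translations
  have injL : ∀ x {a b : X}, o x a = o x b → a = b := by
    intro x a b h
    have h' := congrArg (od x) h
    rwa [h₂, h₂] at h'
  have injR : ∀ x {a b : X}, u a x = u b x → a = b := by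
    intro x a b h
    have h' := congrArg (fun t => ud t x) h
    rwa [h₄, h₄] at h'
  -- pointwise structural facts
  have f1 : ∀ x y z, o (u x y) z = o x z := by
    intro x y z
    apply injL (o x y)
    rw [← h₅]
    exact hLD x y z
  have f2 : ∀ x y z, u x (o y z) = u x z := by
    intro x y z
    apply injR (u y z)
    rw [← h₇]
    exact hRD z x y
  have fc : ∀ x y z, u (o x y) z = o x (u y z) := by
    intro x y z
    have e6 := h₆ x y z
    rw [f1 x y z] at e6
    rw [f2 x y z] at e6
    rw [f1 x z (u y z)] at e6
    rw [f2 (o x y) x z] at e6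
    exact e6
  -- perm-level facts
  have Linv : ∀ x a, (L x)⁻¹ a = od x a := by
    intro x a
    apply (L x).injective
    rw [Equiv.Perm.coe_inv, Equiv.apply_symm_apply, hL, h₁]
  have Rinv : ∀ x a, (R x)⁻¹ a = ud a x := by
    intro x a
    apply (R x).injective
    rw [Equiv.Perm.coe_inv, Equiv.apply_symm_apply, hR, h₃]
  have LS : ∀ p t, L (u p t) = L p := by
    intro p t; apply Equiv.ext; intro z
    rw [hL, hL, f1]
  have RT : ∀ x z, R (o x z) = R z := by
    intro x z; apply Equiv.ext; intro c
    rw [hR, hR, f2]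
  have Lconj : ∀ a b, L (o a b) = L a * L b * (L a)⁻¹ := by
    intro a b
    apply Equiv.ext; intro c
    simp only [Equiv.Perm.mul_apply, hL, Linv]
    conv_lhs => rw [show c = o a (od a c) from (h₁ a c).symm]
    rw [← hLD]
  have Rconj : ∀ a b, R (u b a) = R a * R b * (R a)⁻¹ := by
    intro a b
    apply Equiv.ext; intro c
    simp only [Equiv.Perm.mul_apply, hR, Rinv]
    conv_lhs => rw [show c = u (ud c a) a from (h₃ a c).symm]
    exact (hRD a (ud c a) b).symm
  have LRc : ∀ x z, L x * R z = R z * L x := by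
    intro x z
    apply Equiv.ext; intro a
    simp only [Equiv.Perm.mul_apply, hL, hR]
    exact (fc x a z).symm
  set Gr := Subgroup.closure (Set.range L ∪ Set.range R) with hGr
  have memL : ∀ a, L a ∈ Gr := fun a => Subgroup.subset_closure (Or.inl ⟨a, rfl⟩)
  have memR : ∀ a, R a ∈ Gr := fun a => Subgroup.subset_closure (Or.inr ⟨a, rfl⟩)
  set eL : X → ↥Gr := fun a => ⟨L a, memL a⟩ with heL
  set eR : X → ↥Gr := fun a => ⟨R a, memR a⟩ with heR
  have eLcoe : ∀ a, ((eL a : ↥Gr) : Equiv.Perm X) = L a := fun a => rfl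
  have eRcoe : ∀ a, ((eR a : ↥Gr) : Equiv.Perm X) = R a := fun a => rfl
  have eLconj : ∀ a b, eL (o a b) = eL a * eL b * (eL a)⁻¹ := by
    intro a b; exact Subtype.ext (Lconj a b)
  have eRconj : ∀ a b, eR (u b a) = eR a * eR b * (eR a)⁻¹ := by
    intro a b; exact Subtype.ext (Rconj a b)
  have eLS : ∀ p t, eL (u p t) = eL p := fun p t => Subtype.ext (LS p t)
  have eRT : ∀ x z, eR (o x z) = eR z := fun x z => Subtype.ext (RT x z)
  have eLRc : ∀ x z, eL x * eR z = eR z * eL x := fun x z => Subtype.ext (LRc x z)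
  have hTop : Subgroup.closure (Set.range eL ∪ Set.range eR) = ⊤ := by
    rw [eq_top_iff, ← Subgroup.closure_preimage_eq_top (Set.range L ∪ Set.range R)]
    apply Subgroup.closure_le _ |>.mpr
    rintro g hg
    rcases hg with ⟨x, hx⟩ | ⟨x, hx⟩
    · exact Subgroup.subset_closure (Or.inl ⟨x, Subtype.ext hx⟩)
    · exact Subgroup.subset_closure (Or.inr ⟨x, Subtype.ext hx⟩)
  tfae_have 1 → 2 := by
    rintro ⟨rl, rr⟩
    constructor
    · intro x y l hlen
      cases l with
      | nil => simp only [List.length_nil] at hlen; omega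
      | cons a t =>
        have ht : t.length + 1 = m + 2 := by simpa using hlen
        rw [rl x a t ht, rl y a t ht]
    · intro x y l hlen
      rcases List.eq_nil_or_concat' l with rfl | ⟨t, c, rfl⟩
      · simp only [List.length_nil] at hlen; omega
      · have ht : t.length + 1 = m + 2 := by simpa using hlen
        rw [rr t c x ht, rr t c y ht]
  tfae_have 3 → 1 := by
    intro h3
    have hb : (⊤ : Subgroup ↥Gr).lowerCentralSeries (m + 1) = ⊥ := by
      have e : m + 2 - 1 = m + 1 := by omega
      rwa [e] at h3
    have claimL : ∀ (l : List X) (a b : X),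
        eL (List.foldl o a (b :: l)) * (eL (List.foldl o b l))⁻¹
          ∈ (⊤ : Subgroup ↥Gr).lowerCentralSeries (l.length + 1) := by
      intro l
      induction l using List.reverseRecOn with
      | nil =>
        intro a b
        simp only [List.foldl_cons, List.foldl_nil]
        rw [eLconj a b]
        have key : eL a * eL b * (eL a)⁻¹ * (eL b)⁻¹ = ⁅eL a, eL b⁆ := by
          rw [commutatorElement_def]
        rw [key]
        show _ ∈ ⁅(⊤ : Subgroup ↥Gr).lowerCentralSeries 0, (⊤ : Subgroup ↥Gr)⁆
        rw [Subgroup.lowerCentralSeries_zero]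
        exact Subgroup.commutator_mem_commutator (Subgroup.mem_top _) (Subgroup.mem_top _)
      | append_singleton l y ihl =>
        intro a b
        rw [show b :: (l ++ [y]) = (b :: l) ++ [y] from rfl, List.foldl_append,
          List.foldl_append]
        simp only [List.foldl_cons, List.foldl_nil]
        rw [eLconj, eLconj]
        have hlen : (l ++ [y]).length + 1 = (l.length + 1) + 1 := by simp
        rw [hlen]
        exact aux_lcs_step _ _ _ _ (ihl a b)
    have claimR : ∀ (l : List X) (a b : X),
        eR (List.foldr u b (l ++ [a])) * (eR (List.foldr u a l))⁻¹
          ∈ (⊤ : Subgroup ↥Gr).lowerCentralSeries (l.length + 1) := by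
      intro l
      induction l with
      | nil =>
        intro a b
        simp only [List.nil_append, List.foldr_cons, List.foldr_nil]
        rw [eRconj b a]
        have key : eR b * eR a * (eR b)⁻¹ * (eR a)⁻¹ = ⁅eR b, eR a⁆ := by
          rw [commutatorElement_def]
        rw [key]
        show _ ∈ ⁅(⊤ : Subgroup ↥Gr).lowerCentralSeries 0, (⊤ : Subgroup ↥Gr)⁆
        rw [Subgroup.lowerCentralSeries_zero]
        exact Subgroup.commutator_mem_commutator (Subgroup.mem_top _) (Subgroup.mem_top _)
      | cons x t iht =>
        intro a b
        simp only [List.cons_append, List.foldr_cons]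
        rw [eRconj (List.foldr u b (t ++ [a])) x, eRconj (List.foldr u a t) x]
        have hlen : (x :: t).length + 1 = (t.length + 1) + 1 := by simp
        rw [hlen]
        exact aux_lcs_step _ _ _ _ (iht a b)
    constructor
    · intro x₀ x₁ l hlen
      rcases List.eq_nil_or_concat' l with rfl | ⟨l', y, rfl⟩
      · simp only [List.length_nil] at hlen; omega
      · have hl' : l'.length + 1 = m + 1 := by
          simp only [List.length_append, List.length_cons, List.length_nil] at hlen
          omega
        have hmem := claimL l' x₀ x₁
        rw [hl', hb, Subgroup.mem_bot, mul_inv_eq_one] at hmem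
        have heq : L (List.foldl o x₀ (x₁ :: l')) = L (List.foldl o x₁ l') :=
          congrArg Subtype.val hmem
        rw [List.foldl_cons] at heq
        rw [show x₁ :: (l' ++ [y]) = (x₁ :: l') ++ [y] from rfl, List.foldl_append,
          List.foldl_append]
        simp only [List.foldl_cons, List.foldl_nil]
        rw [← hL (List.foldl o (o x₀ x₁) l') y, ← hL (List.foldl o x₁ l') y, heq]
    · intro l a b hlen
      cases l with
      | nil => simp only [List.length_nil] at hlen; omega
      | cons x₀ t =>
        have ht : t.length + 1 = m + 1 := by
          simp only [List.length_cons] at hlen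
          omega
        have hmem := claimR t a b
        rw [ht, hb, Subgroup.mem_bot, mul_inv_eq_one] at hmem
        have heq : R (List.foldr u b (t ++ [a])) = R (List.foldr u a t) :=
          congrArg Subtype.val hmem
        simp only [List.cons_append, List.foldr_cons]
        rw [← hR (List.foldr u b (t ++ [a])) x₀, ← hR (List.foldr u a t) x₀, heq]
  tfae_have 2 → 3 := by
    rintro ⟨pl, pr⟩
    -- word machinery
    set ap : List (Bool × X) → X → X :=
      fun Ul x => Ul.foldr (fun l ξ => cond l.1 (o ξ l.2) (u l.2 ξ)) x with hap
    have apT : ∀ (w : X) U x, ap ((true, w) :: U) x = o (ap U x) w := fun _ _ _ => rfl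
    have apF : ∀ (p : X) U x, ap ((false, p) :: U) x = u p (ap U x) := fun _ _ _ => rfl
    have apApp : ∀ U V (x : X), ap (U ++ V) x = ap U (ap V x) := by
      intro U V x
      simp only [hap, List.foldr_append]
    have lemA : ∀ U : List (Bool × X), (∃ l ∈ U, l.1 = false) →
        ∀ p q, L (ap U p) = L (ap U q) := by
      intro U
      induction U with
      | nil => rintro ⟨l, hl, -⟩; simp at hl
      | cons hd tl ih =>
        rintro ⟨l, hl, hfalse⟩ p q
        obtain ⟨b, w⟩ := hd
        cases b with
        | false => rw [apF, apF, LS, LS]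
        | true =>
          rw [apT, apT, Lconj, Lconj]
          have hex : ∃ l ∈ tl, l.1 = false := by
            rcases List.mem_cons.mp hl with h | h
            · rw [h] at hfalse; simp at hfalse
            · exact ⟨l, h, hfalse⟩
          rw [ih hex p q]
    have lemB : ∀ U : List (Bool × X), (∃ l ∈ U, l.1 = true) →
        ∀ p q, R (ap U p) = R (ap U q) := by
      intro U
      induction U with
      | nil => rintro ⟨l, hl, -⟩; simp at hl
      | cons hd tl ih =>
        rintro ⟨l, hl, htrue⟩ p q
        obtain ⟨b, w⟩ := hd
        cases b with
        | true => rw [apT, apT, RT, RT]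
        | false =>
          rw [apF, apF, Rconj, Rconj]
          have hex : ∃ l ∈ tl, l.1 = true := by
            rcases List.mem_cons.mp hl with h | h
            · rw [h] at htrue; simp at htrue
            · exact ⟨l, h, htrue⟩
          rw [ih hex p q]
    have pureT : ∀ U : List (Bool × X), (∀ l ∈ U, l.1 = true) →
        ∀ x, ap U x = List.foldl o x (U.map Prod.snd).reverse := by
      intro U
      induction U with
      | nil => intro _ x; rfl
      | cons hd tl ih =>
        intro hall x
        obtain ⟨b, w⟩ := hd
        have hb : b = true := hall (b, w) List.mem_cons_self
        subst hb
        rw [apT, ih (fun l hl => hall l (List.mem_cons_of_mem _ hl)) x]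
        simp [List.foldl_append]
    have pureS : ∀ U : List (Bool × X), (∀ l ∈ U, l.1 = false) →
        ∀ x, ap U x = List.foldr u x (U.map Prod.snd) := by
      intro U
      induction U with
      | nil => intro _ x; rfl
      | cons hd tl ih =>
        intro hall x
        obtain ⟨b, w⟩ := hd
        have hb : b = false := hall (b, w) List.mem_cons_self
        subst hb
        rw [apF, ih (fun l hl => hall l (List.mem_cons_of_mem _ hl)) x]
        simp
    have master : ∀ U : List (Bool × X), U.length = m + 1 →
        ∀ p q, L (ap U p) = L (ap U q) ∧ R (ap U p) = R (ap U q) := by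
      intro U hU p q
      constructor
      · by_cases hT : ∀ l ∈ U, l.1 = true
        · apply Equiv.ext; intro z
          rw [hL, hL, pureT U hT p, pureT U hT q]
          have hlen : ((U.map Prod.snd).reverse ++ [z]).length = m + 2 := by
            simp [hU]
          have hfold := pl p q ((U.map Prod.snd).reverse ++ [z]) hlen
          simpa [List.foldl_append] using hfold
        · push_neg at hT
          obtain ⟨l, hlU, hl⟩ := hT
          simp only [Bool.not_eq_true] at hl
          exact lemA U ⟨l, hlU, hl⟩ p q
      · by_cases hF : ∀ l ∈ U, l.1 = false
        · apply Equiv.ext; intro z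
          rw [hR, hR, pureS U hF p, pureS U hF q]
          have hlen : (z :: U.map Prod.snd).length = m + 2 := by simp [hU]
          have hfold := pr p q (z :: U.map Prod.snd) hlen
          simpa using hfold
        · push_neg at hF
          obtain ⟨l, hlU, hl⟩ := hF
          simp only [Bool.not_eq_false] at hl
          exact lemB U ⟨l, hlU, hl⟩ p q
    have Q : ∀ j, ∀ p q : X,
        (∀ U : List (Bool × X), U.length = j →
          L (ap U p) = L (ap U q) ∧ R (ap U p) = R (ap U q)) →
        (eL p * (eL q)⁻¹ ∈ Subgroup.upperCentralSeries ↥Gr j ∧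
         eR p * (eR q)⁻¹ ∈ Subgroup.upperCentralSeries ↥Gr j) := by
      intro j
      induction j with
      | zero =>
        intro p q hpq
        obtain ⟨hLpq, hRpq⟩ := hpq [] rfl
        rw [Subgroup.upperCentralSeries_zero]
        constructor
        · rw [Subgroup.mem_bot, mul_inv_eq_one]
          exact Subtype.ext hLpq
        · rw [Subgroup.mem_bot, mul_inv_eq_one]
          exact Subtype.ext hRpq
      | succ j ih =>
        intro p q hpq
        constructor
        · rw [Subgroup.mem_upperCentralSeries_succ_iff]
          apply aux_comm_mem_of_gen hTop inferInstance
          rintro s (⟨x, rfl⟩ | ⟨x, rfl⟩)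
          · have hqw : o q (od q x) = x := h₁ q x
            set w := od q x with hw
            have key : (eL p * (eL q)⁻¹) * eL x * (eL p * (eL q)⁻¹)⁻¹ * (eL x)⁻¹
                = (eL (o p w)) * (eL (o q w))⁻¹ := by
              rw [show eL x = eL (o q w) from by rw [hqw], eLconj p w, eLconj q w]
              group
            rw [key]
            refine (ih (o p w) (o q w) ?_).1
            intro U hU
            have h1 := hpq (U ++ [(true, w)]) (by simp [hU])
            rw [apApp, apApp] at h1
            exact h1
          · have hc1 : Commute (eL p) (eR x) := eLRc p x
            have hc2 : Commute (eL q) (eR x) := eLRc q x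
            have hc : Commute (eL p * (eL q)⁻¹) (eR x) := hc1.mul_left hc2.inv_left
            have key : (eL p * (eL q)⁻¹) * eR x * (eL p * (eL q)⁻¹)⁻¹ * (eR x)⁻¹ = 1 := by
              rw [hc.eq]; group
            rw [key]; exact Subgroup.one_mem _
        · rw [Subgroup.mem_upperCentralSeries_succ_iff]
          apply aux_comm_mem_of_gen hTop inferInstance
          rintro s (⟨x, rfl⟩ | ⟨x, rfl⟩)
          · have hc1 : Commute (eL x) (eR p) := eLRc x p
            have hc2 : Commute (eL x) (eR q) := eLRc x q
            have hc : Commute (eR p * (eR q)⁻¹) (eL x) := hc1.symm.mul_left hc2.symm.inv_left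
            have key : (eR p * (eR q)⁻¹) * eL x * (eR p * (eR q)⁻¹)⁻¹ * (eL x)⁻¹ = 1 := by
              rw [hc.eq]; group
            rw [key]; exact Subgroup.one_mem _
          · have hqw : u (ud x q) q = x := h₃ q x
            set w := ud x q with hw
            have key : (eR p * (eR q)⁻¹) * eR x * (eR p * (eR q)⁻¹)⁻¹ * (eR x)⁻¹
                = (eR (u w p)) * (eR (u w q))⁻¹ := by
              rw [show eR x = eR (u w q) from by rw [hqw], eRconj p w, eRconj q w]
              group
            rw [key]
            refine (ih (u w p) (u w q) ?_).2
            intro U hU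
            have h1 := hpq (U ++ [(false, w)]) (by simp [hU])
            rw [apApp, apApp] at h1
            exact h1
    have diffs : ∀ p q : X,
        eL p * (eL q)⁻¹ ∈ Subgroup.upperCentralSeries ↥Gr (m + 1) ∧
        eR p * (eR q)⁻¹ ∈ Subgroup.upperCentralSeries ↥Gr (m + 1) :=
      fun p q => Q (m + 1) p q (fun U hU => master U hU p q)
    have hnormal : ∀ i : ℕ, (Subgroup.upperCentralSeries ↥Gr i).Normal := fun i => inferInstance
    have genZ : ∀ s ∈ (Set.range eL ∪ Set.range eR), s ∈ Subgroup.upperCentralSeries ↥Gr (m + 1) := by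
      rintro s (⟨x, rfl⟩ | ⟨x, rfl⟩)
      · rw [Subgroup.mem_upperCentralSeries_succ_iff]
        apply aux_comm_mem_of_gen hTop inferInstance
        rintro t (⟨y, rfl⟩ | ⟨y, rfl⟩)
        · have hd : (eL y)⁻¹ * eL x ∈ Subgroup.upperCentralSeries ↥Gr (m + 1) := by
            have hmem := (diffs x y).1
            have key : (eL y)⁻¹ * eL x
                = (eL y)⁻¹ * (eL x * (eL y)⁻¹) * ((eL y)⁻¹)⁻¹ := by group
            rw [key]
            exact (hnormal (m + 1)).conj_mem _ hmem _
          have h2 := Subgroup.mem_upperCentralSeries_succ_iff.mp hd (eL y)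
          have keyc : eL x * eL y * (eL x)⁻¹ * (eL y)⁻¹
              = eL y * (((eL y)⁻¹ * eL x) * eL y * ((eL y)⁻¹ * eL x)⁻¹ * (eL y)⁻¹)
                * (eL y)⁻¹ := by group
          rw [keyc]
          exact (hnormal m).conj_mem _ h2 _
        · have hc : Commute (eL x) (eR y) := eLRc x y
          have key : eL x * eR y * (eL x)⁻¹ * (eR y)⁻¹ = 1 := by
            rw [hc.eq]; group
          rw [key]; exact Subgroup.one_mem _
      · rw [Subgroup.mem_upperCentralSeries_succ_iff]
        apply aux_comm_mem_of_gen hTop inferInstance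
        rintro t (⟨y, rfl⟩ | ⟨y, rfl⟩)
        · have hc : Commute (eR x) (eL y) := (show Commute (eL y) (eR x) from eLRc y x).symm
          have key : eR x * eL y * (eR x)⁻¹ * (eL y)⁻¹ = 1 := by
            rw [hc.eq]; group
          rw [key]; exact Subgroup.one_mem _
        · have hd : (eR y)⁻¹ * eR x ∈ Subgroup.upperCentralSeries ↥Gr (m + 1) := by
            have hmem := (diffs x y).2
            have key : (eR y)⁻¹ * eR x
                = (eR y)⁻¹ * (eR x * (eR y)⁻¹) * ((eR y)⁻¹)⁻¹ := by group
            rw [key]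
            exact (hnormal (m + 1)).conj_mem _ hmem _
          have h2 := Subgroup.mem_upperCentralSeries_succ_iff.mp hd (eR y)
          have keyc : eR x * eR y * (eR x)⁻¹ * (eR y)⁻¹
              = eR y * (((eR y)⁻¹ * eR x) * eR y * ((eR y)⁻¹ * eR x)⁻¹ * (eR y)⁻¹)
                * (eR y)⁻¹ := by group
          rw [keyc]
          exact (hnormal m).conj_mem _ h2 _
    have Ztop : Subgroup.upperCentralSeries ↥Gr (m + 1) = ⊤ := by
      rw [eq_top_iff, ← hTop]
      exact (Subgroup.closure_le _).mpr genZ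
    have e : m + 2 - 1 = m + 1 := by omega
    rw [e]
    exact aux_ucs_to_lcs (m + 1) Ztop
  tfae_finish
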